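/- For the rank-2 exchange matrix of type G₂, B = [[0,−3],[1,0]], the alternating mutation sequence μ₁, μ₂, μ₁, μ₂, μ₁, μ₂, μ₁, μ₂ (length 8) returns the classical y-seed to its initial value, i.e. the composition of these eight y-variable mutations is the identity on ℚ(Y₁, Y₂)². -/

import Mathlib

/-- The field of rational functions `ℚ(Y₁, Y₂)`. -/
abbrev K2 : Type := FractionRing (MvPolynomial (Fin 2) ℚ)

noncomputable def Ygen (i : Fin 2) : K2 :=
  algebraMap (MvPolynomial (Fin 2) ℚ) K2 (MvPolynomial.X i)

/-- Fomin–Zelevinsky mutation of the exchange matrix at `k`: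
`b'_{ij} = −b_{ij}` if `i = k` or `j = k`, else
`b'_{ij} = b_{ij} + [b_{ik}]₊[b_{kj}]₊ − [−b_{ik}]₊[−b_{kj}]₊`. -/
def muB (B : Matrix (Fin 2) (Fin 2) ℤ) (k : Fin 2) : Matrix (Fin 2) (Fin 2) ℤ :=
  fun i j => if i = k ∨ j = k then -B i j
    else B i j + max (B i k) 0 * max (B k j) 0 - max (-B i k) 0 * max (-B k j) 0

/-- Classical y-variable mutation at `k`: `y_k ↦ y_k⁻¹`, and for `j ≠ k`,
`y_j ↦ y_j(1+y_k)^{b_{kj}}` if `b_{kj} ≥ 0`, `y_j ↦ y_j(1+y_k⁻¹)^{b_{kj}}` if `b_{kj} ≤ 0`. -/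
noncomputable def muY (B : Matrix (Fin 2) (Fin 2) ℤ) (y : Fin 2 → K2) (k : Fin 2) :
    Fin 2 → K2 :=
  fun j => if j = k then (y k)⁻¹
    else if 0 ≤ B k j then y j * (1 + y k) ^ B k j
    else y j * (1 + (y k)⁻¹) ^ B k j

/-- Mutation of a y-seed `(B, y)`. -/
noncomputable def muSeed (S : Matrix (Fin 2) (Fin 2) ℤ × (Fin 2 → K2)) (k : Fin 2) :
    Matrix (Fin 2) (Fin 2) ℤ × (Fin 2 → K2) :=
  (muB S.1 k, muY S.1 S.2 k)

/-! ### Auxiliary material for the proof -/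

noncomputable def av : K2 := Ygen 0
noncomputable def bv : K2 := Ygen 1

lemma K2_map_ne (p : MvPolynomial (Fin 2) ℚ)
    (h : MvPolynomial.eval (fun _ => (1:ℚ)) p ≠ 0) :
    algebraMap (MvPolynomial (Fin 2) ℚ) K2 p ≠ 0 := by
  intro hp
  have hinj := IsFractionRing.injective (MvPolynomial (Fin 2) ℚ) K2
  have : p = 0 := hinj (by simpa using hp)
  exact h (by simp [this])

lemma hav : av ≠ 0 := K2_map_ne _ (by norm_num)
lemma hbv : bv ≠ 0 := K2_map_ne _ (by norm_num)
lemma h1a : (1 + av) ≠ 0 := by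
  have := K2_map_ne (1 + MvPolynomial.X 0) (by norm_num)
  simpa [av, Ygen, map_add, map_one] using this
lemma h1b : (1 + bv) ≠ 0 := by
  have := K2_map_ne (1 + MvPolynomial.X 1) (by norm_num)
  simpa [bv, Ygen, map_add, map_one] using this
lemma hD : ((1+av)^3 + av^3*bv) ≠ 0 := by
  have := K2_map_ne ((1 + MvPolynomial.X 0)^3 + (MvPolynomial.X 0)^3 * MvPolynomial.X 1)
    (by norm_num)
  simpa [av, bv, Ygen, map_add, map_one, map_mul, map_pow] using this
lemma hC : ((1+av)^2 + av^2*bv) ≠ 0 := by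
  have := K2_map_ne ((1 + MvPolynomial.X 0)^2 + (MvPolynomial.X 0)^2 * MvPolynomial.X 1)
    (by norm_num)
  simpa [av, bv, Ygen, map_add, map_one, map_mul, map_pow] using this
lemma hE : ((1+av)^3 + 3*av^2*bv + 2*av^3*bv + av^3*bv^2) ≠ 0 := by
  have := K2_map_ne ((1 + MvPolynomial.X 0)^3 + 3*(MvPolynomial.X 0)^2 * MvPolynomial.X 1
      + 2*(MvPolynomial.X 0)^3 * MvPolynomial.X 1
      + (MvPolynomial.X 0)^3 * (MvPolynomial.X 1)^2) (by norm_num)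
  simpa [av, bv, Ygen, map_add, map_one, map_mul, map_pow, map_ofNat] using this
lemma hF : (1 + av + av*bv) ≠ 0 := by
  have := K2_map_ne (1 + MvPolynomial.X 0 + MvPolynomial.X 0 * MvPolynomial.X 1) (by norm_num)
  simpa [av, bv, Ygen, map_add, map_one, map_mul] using this

lemma zpm3 (x : K2) : x ^ (-3 : ℤ) = (x^3)⁻¹ := by
  rw [zpow_neg, show (3:ℤ) = ((3:ℕ):ℤ) from rfl, zpow_natCast]

lemma zpm1 (x : K2) : x ^ (-1 : ℤ) = x⁻¹ := zpow_neg_one x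

lemma muB1 : muB !![0, -3; 1, 0] 0 = !![0, 3; -1, 0] := by
  ext i j; fin_cases i <;> fin_cases j <;> simp [muB]

lemma muB2 : muB !![0, 3; -1, 0] 1 = !![0, -3; 1, 0] := by
  ext i j; fin_cases i <;> fin_cases j <;> simp [muB]

set_option maxHeartbeats 1600000 in
/-- For the G₂ exchange matrix `B = [[0,−3],[1,0]]`, the alternating mutation sequence
`μ₁, μ₂, μ₁, μ₂, μ₁, μ₂, μ₁, μ₂` of length 8 returns the classical y-seed to its
initial value. -/
theorem G2_y_period_eight :
    ([0, 1, 0, 1, 0, 1, 0, 1] : List (Fin 2)).foldl muSeed (!![0, -3; 1, 0], Ygen) =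
      (!![0, -3; 1, 0], Ygen) := by
  have ha := hav; have hb := hbv; have h1a := h1a; have h1b := h1b
  have hD := hD; have hC := hC; have hE := hE; have hF := hF
  have h1 : muSeed (!![0, -3; 1, 0], Ygen) 0 =
      (!![0, 3; -1, 0], ![av⁻¹, av^3*bv/(1+av)^3]) := by
    refine Prod.ext muB1 ?_
    show muY _ _ _ = _
    funext j; fin_cases j
    · simp only [muY, Matrix.cons_val_zero, Matrix.cons_val_one, Matrix.head_cons,
        Matrix.cons_val', Matrix.empty_val', Matrix.cons_val_fin_one]
      rw [if_pos (by decide)]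
      rfl
    · simp only [muY, Matrix.cons_val_zero, Matrix.cons_val_one, Matrix.head_cons,
        Matrix.cons_val', Matrix.empty_val', Matrix.cons_val_fin_one]
      rw [if_neg (by decide), if_neg (by norm_num)]
      show bv * (1 + av⁻¹) ^ ((-3 : ℤ)) = av^3*bv/(1+av)^3
      have e : (1:K2) + av⁻¹ = (1+av)/av := by field_simp; ring
      rw [zpm3, e, div_pow, inv_div]
      field_simp
  have h2 : muSeed (!![0, 3; -1, 0], ![av⁻¹, av^3*bv/(1+av)^3]) 1 =
      (!![0, -3; 1, 0], ![av^2*bv/((1+av)^3 + av^3*bv), (1+av)^3/(av^3*bv)]) := by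
    refine Prod.ext muB2 ?_
    show muY _ _ _ = _
    have e : (1:K2) + (av^3*bv/(1+av)^3)⁻¹ = ((1+av)^3 + av^3*bv)/(av^3*bv) := by
      rw [inv_div]; field_simp; ring
    funext j; fin_cases j
    · simp only [muY, Matrix.cons_val_zero, Matrix.cons_val_one, Matrix.head_cons,
        Matrix.cons_val', Matrix.empty_val', Matrix.cons_val_fin_one]
      rw [if_neg (by decide), if_neg (by norm_num)]
      show av⁻¹ * (1 + (av^3*bv/(1+av)^3)⁻¹) ^ ((-1 : ℤ))
          = av^2*bv/((1+av)^3 + av^3*bv)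
      rw [zpm1, e, inv_div]
      field_simp
    · simp only [muY, Matrix.cons_val_zero, Matrix.cons_val_one, Matrix.head_cons,
        Matrix.cons_val', Matrix.empty_val', Matrix.cons_val_fin_one]
      rw [if_pos (by decide)]
      show (av^3*bv/(1+av)^3)⁻¹ = (1+av)^3/(av^3*bv)
      rw [inv_div]
  have h3 : muSeed (!![0, -3; 1, 0],
        ![av^2*bv/((1+av)^3 + av^3*bv), (1+av)^3/(av^3*bv)]) 0 =
      (!![0, 3; -1, 0], ![((1+av)^3 + av^3*bv)/(av^2*bv),
        av^3*bv^2/((1+av)^2 + av^2*bv)^3]) := by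
    refine Prod.ext muB1 ?_
    show muY _ _ _ = _
    have e : (1:K2) + (av^2*bv/((1+av)^3 + av^3*bv))⁻¹
        = ((1+av)*((1+av)^2 + av^2*bv))/(av^2*bv) := by
      rw [inv_div]; field_simp; ring
    funext j; fin_cases j
    · simp only [muY, Matrix.cons_val_zero, Matrix.cons_val_one, Matrix.head_cons,
        Matrix.cons_val', Matrix.empty_val', Matrix.cons_val_fin_one]
      rw [if_pos (by decide)]
      show (av^2*bv/((1+av)^3 + av^3*bv))⁻¹ = ((1+av)^3 + av^3*bv)/(av^2*bv)
      rw [inv_div]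
    · simp only [muY, Matrix.cons_val_zero, Matrix.cons_val_one, Matrix.head_cons,
        Matrix.cons_val', Matrix.empty_val', Matrix.cons_val_fin_one]
      rw [if_neg (by decide), if_neg (by norm_num)]
      show (1+av)^3/(av^3*bv) * (1 + (av^2*bv/((1+av)^3 + av^3*bv))⁻¹) ^ ((-3 : ℤ))
          = av^3*bv^2/((1+av)^2 + av^2*bv)^3
      rw [zpm3, e, div_pow, inv_div]
      field_simp
  have h4 : muSeed (!![0, 3; -1, 0], ![((1+av)^3 + av^3*bv)/(av^2*bv),
        av^3*bv^2/((1+av)^2 + av^2*bv)^3]) 1 =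
      (!![0, -3; 1, 0], ![av*bv/((1+av)^3 + 3*av^2*bv + 2*av^3*bv + av^3*bv^2),
        ((1+av)^2 + av^2*bv)^3/(av^3*bv^2)]) := by
    refine Prod.ext muB2 ?_
    show muY _ _ _ = _
    have e : (1:K2) + (av^3*bv^2/((1+av)^2 + av^2*bv)^3)⁻¹
        = (((1+av)^3 + av^3*bv)*((1+av)^3 + 3*av^2*bv + 2*av^3*bv + av^3*bv^2))
            /(av^3*bv^2) := by
      rw [inv_div]; field_simp; ring
    funext j; fin_cases j
    · simp only [muY, Matrix.cons_val_zero, Matrix.cons_val_one, Matrix.head_cons,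
        Matrix.cons_val', Matrix.empty_val', Matrix.cons_val_fin_one]
      rw [if_neg (by decide), if_neg (by norm_num)]
      show ((1+av)^3 + av^3*bv)/(av^2*bv)
            * (1 + (av^3*bv^2/((1+av)^2 + av^2*bv)^3)⁻¹) ^ ((-1 : ℤ))
          = av*bv/((1+av)^3 + 3*av^2*bv + 2*av^3*bv + av^3*bv^2)
      rw [zpm1, e, inv_div]
      field_simp
    · simp only [muY, Matrix.cons_val_zero, Matrix.cons_val_one, Matrix.head_cons,
        Matrix.cons_val', Matrix.empty_val', Matrix.cons_val_fin_one]
      rw [if_pos (by decide)]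
      show (av^3*bv^2/((1+av)^2 + av^2*bv)^3)⁻¹ = ((1+av)^2 + av^2*bv)^3/(av^3*bv^2)
      rw [inv_div]
  have h5 : muSeed (!![0, -3; 1, 0],
        ![av*bv/((1+av)^3 + 3*av^2*bv + 2*av^3*bv + av^3*bv^2),
          ((1+av)^2 + av^2*bv)^3/(av^3*bv^2)]) 0 =
      (!![0, 3; -1, 0], ![((1+av)^3 + 3*av^2*bv + 2*av^3*bv + av^3*bv^2)/(av*bv),
        bv/(1 + av + av*bv)^3]) := by
    refine Prod.ext muB1 ?_
    show muY _ _ _ = _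
    have e : (1:K2) + (av*bv/((1+av)^3 + 3*av^2*bv + 2*av^3*bv + av^3*bv^2))⁻¹
        = (((1+av)^2 + av^2*bv)*(1 + av + av*bv))/(av*bv) := by
      rw [inv_div]; field_simp; ring
    funext j; fin_cases j
    · simp only [muY, Matrix.cons_val_zero, Matrix.cons_val_one, Matrix.head_cons,
        Matrix.cons_val', Matrix.empty_val', Matrix.cons_val_fin_one]
      rw [if_pos (by decide)]
      show (av*bv/((1+av)^3 + 3*av^2*bv + 2*av^3*bv + av^3*bv^2))⁻¹
          = ((1+av)^3 + 3*av^2*bv + 2*av^3*bv + av^3*bv^2)/(av*bv)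
      rw [inv_div]
    · simp only [muY, Matrix.cons_val_zero, Matrix.cons_val_one, Matrix.head_cons,
        Matrix.cons_val', Matrix.empty_val', Matrix.cons_val_fin_one]
      rw [if_neg (by decide), if_neg (by norm_num)]
      show ((1+av)^2 + av^2*bv)^3/(av^3*bv^2)
            * (1 + (av*bv/((1+av)^3 + 3*av^2*bv + 2*av^3*bv + av^3*bv^2))⁻¹) ^ ((-3 : ℤ))
          = bv/(1 + av + av*bv)^3
      rw [zpm3, e, div_pow, inv_div]
      field_simp
  have h6 : muSeed (!![0, 3; -1, 0],
        ![((1+av)^3 + 3*av^2*bv + 2*av^3*bv + av^3*bv^2)/(av*bv),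
          bv/(1 + av + av*bv)^3]) 1 =
      (!![0, -3; 1, 0], ![(av*(1+bv))⁻¹, (1 + av + av*bv)^3/bv]) := by
    refine Prod.ext muB2 ?_
    show muY _ _ _ = _
    have e : (1:K2) + (bv/(1 + av + av*bv)^3)⁻¹
        = (((1+av)^3 + 3*av^2*bv + 2*av^3*bv + av^3*bv^2)*(1+bv))/bv := by
      rw [inv_div]; field_simp; ring
    funext j; fin_cases j
    · simp only [muY, Matrix.cons_val_zero, Matrix.cons_val_one, Matrix.head_cons,
        Matrix.cons_val', Matrix.empty_val', Matrix.cons_val_fin_one]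
      rw [if_neg (by decide), if_neg (by norm_num)]
      show ((1+av)^3 + 3*av^2*bv + 2*av^3*bv + av^3*bv^2)/(av*bv)
            * (1 + (bv/(1 + av + av*bv)^3)⁻¹) ^ ((-1 : ℤ))
          = (av*(1+bv))⁻¹
      rw [zpm1, e, inv_div]
      generalize hX : ((1+av)^3 + 3*av^2*bv + 2*av^3*bv + av^3*bv^2) = X at hE ⊢
      rw [div_mul_div_comm, show av*bv*(X*(1+bv)) = (X*bv)*(av*(1+bv)) by ring,
        div_mul_cancel_left₀ (mul_ne_zero hE hb)]
    · simp only [muY, Matrix.cons_val_zero, Matrix.cons_val_one, Matrix.head_cons,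
        Matrix.cons_val', Matrix.empty_val', Matrix.cons_val_fin_one]
      rw [if_pos (by decide)]
      show (bv/(1 + av + av*bv)^3)⁻¹ = (1 + av + av*bv)^3/bv
      rw [inv_div]
  have h7 : muSeed (!![0, -3; 1, 0], ![(av*(1+bv))⁻¹, (1 + av + av*bv)^3/bv]) 0 =
      (!![0, 3; -1, 0], ![av*(1+bv), bv⁻¹]) := by
    refine Prod.ext muB1 ?_
    show muY _ _ _ = _
    funext j; fin_cases j
    · simp only [muY, Matrix.cons_val_zero, Matrix.cons_val_one, Matrix.head_cons,
        Matrix.cons_val', Matrix.empty_val', Matrix.cons_val_fin_one]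
      rw [if_pos (by decide)]
      show ((av*(1+bv))⁻¹)⁻¹ = av*(1+bv)
      rw [inv_inv]
    · simp only [muY, Matrix.cons_val_zero, Matrix.cons_val_one, Matrix.head_cons,
        Matrix.cons_val', Matrix.empty_val', Matrix.cons_val_fin_one]
      rw [if_neg (by decide), if_neg (by norm_num)]
      show (1 + av + av*bv)^3/bv * (1 + ((av*(1+bv))⁻¹)⁻¹) ^ ((-3 : ℤ)) = bv⁻¹
      have e : (1:K2) + ((av*(1+bv))⁻¹)⁻¹ = 1 + av + av*bv := by rw [inv_inv]; ring
      rw [zpm3, e]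
      field_simp
  have h8 : muSeed (!![0, 3; -1, 0], ![av*(1+bv), bv⁻¹]) 1 =
      (!![0, -3; 1, 0], Ygen) := by
    refine Prod.ext muB2 ?_
    show muY _ _ _ = _
    funext j; fin_cases j
    · simp only [muY, Matrix.cons_val_zero, Matrix.cons_val_one, Matrix.head_cons,
        Matrix.cons_val', Matrix.empty_val', Matrix.cons_val_fin_one]
      rw [if_neg (by decide), if_neg (by norm_num)]
      show av*(1+bv) * (1 + (bv⁻¹)⁻¹) ^ ((-1 : ℤ)) = Ygen 0
      rw [zpm1, inv_inv, mul_inv_cancel_right₀ h1b]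
      rfl
    · simp only [muY, Matrix.cons_val_zero, Matrix.cons_val_one, Matrix.head_cons,
        Matrix.cons_val', Matrix.empty_val', Matrix.cons_val_fin_one]
      rw [if_pos (by decide)]
      show (bv⁻¹)⁻¹ = Ygen 1
      rw [inv_inv]
      rfl
  show List.foldl muSeed (!![0, -3; 1, 0], Ygen) [0, 1, 0, 1, 0, 1, 0, 1] = _
  rw [List.foldl, h1, List.foldl, h2, List.foldl, h3, List.foldl, h4, List.foldl, h5,
    List.foldl, h6, List.foldl, h7, List.foldl, h8, List.foldl]
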